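/- Let X be a real or complex Banach space, T an invertible bounded linear operator on X, and M, N closed subspaces with X = M ⊕ N (topological direct sum), T(M) ⊆ M and T⁻¹(N) ⊆ N; assume there are constants a ≥ 1 and t ∈ (0,1) such that ‖Tⁿ(y)‖ ≤ a tⁿ ‖y‖ and ‖T⁻ⁿ(z)‖ ≤ a tⁿ ‖z‖ for all integers n ≥ 0, y ∈ M, z ∈ N. Let P_M, P_N be the bounded projections associated with X = M ⊕ N, b = max(‖P_M‖, ‖P_N‖), and Y = M + T⁻¹(N). Let p ∈ ℕ and let R₀,…,R_{p−1} : X → X be homeomorphisms. Then for every family g₀,…,g_{p−1} : X → X of continuous bounded maps there exists a unique family f₀,…,f_{p−1} : X → X of continuous bounded maps with f_j(X) ⊆ Y for all j and f_{j+1}(R_j(x)) − T(f_j(x)) = g_j(x) for all x ∈ X and all j (indices mod p); moreover this unique family satisfies max_j sup_{x∈X} ‖f_j(x)‖ ≤ (a·b·(1+t)/(1−t)) · max_j sup_{x∈X} ‖g_j(x)‖. -/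

import Mathlib

noncomputable section

/-- The sup-norm of the map `F` is finite, i.e. `F` is a bounded map. -/
def BoundedMap {X Y : Type*} [Norm Y] (F : X → Y) : Prop :=
  ∃ C, ∀ x, ‖F x‖ ≤ C

namespace InvariantEqAux

open Fin.NatCast Fin.CommRing

variable {X : Type*} [TopologicalSpace X]

/-- Backward orbit along the inverses of the `R j`. -/
def backOrbit {p : ℕ} (R : Fin (p + 1) → X ≃ₜ X) : ℕ → Fin (p + 1) → X → X
  | 0, _, x => x
  | n + 1, j, x => backOrbit R n (j - 1) ((R (j - 1)).symm x)

/-- Forward orbit along the `R j`. -/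
def fwdOrbit {p : ℕ} (R : Fin (p + 1) → X ≃ₜ X) : ℕ → Fin (p + 1) → X → X
  | 0, _, x => x
  | n + 1, j, x => fwdOrbit R n (j + 1) (R j x)

lemma continuous_backOrbit {p : ℕ} (R : Fin (p + 1) → X ≃ₜ X) (n : ℕ) :
    ∀ j, Continuous (backOrbit R n j) := by
  induction n with
  | zero => exact fun j => continuous_id
  | succ n ih => exact fun j => (ih (j - 1)).comp (R (j - 1)).symm.continuous

lemma continuous_fwdOrbit {p : ℕ} (R : Fin (p + 1) → X ≃ₜ X) (n : ℕ) :
    ∀ j, Continuous (fwdOrbit R n j) := by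
  induction n with
  | zero => exact fun j => continuous_id
  | succ n ih => exact fun j => (ih (j + 1)).comp (R j).continuous

lemma tsum_mem_of_isClosed {𝕜 Y : Type*} [RCLike 𝕜] [NormedAddCommGroup Y] [NormedSpace 𝕜 Y]
    [CompleteSpace Y] {S : Submodule 𝕜 Y} (hS : IsClosed (S : Set Y)) {f : ℕ → Y}
    (hf : Summable f) (h : ∀ n, f n ∈ S) : ∑' n, f n ∈ S :=
  hS.mem_of_tendsto hf.hasSum.tendsto_sum_nat
    (Filter.Eventually.of_forall fun _ => Submodule.sum_mem _ fun i _ => h i)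

variable {𝕜 : Type*} [RCLike 𝕜] {Y : Type*} [NormedAddCommGroup Y] [NormedSpace 𝕜 Y]

/-- Terms of the series defining the `M`-part of the solution. -/
def Aterm {p : ℕ} (T : Y ≃L[𝕜] Y) (PM : Y →L[𝕜] Y) (R : Fin (p + 1) → Y ≃ₜ Y)
    (g : Fin (p + 1) → Y → Y) (n : ℕ) (j : Fin (p + 1)) (y : Y) : Y :=
  (⇑T)^[n] (PM (g (j - ((n + 1 : ℕ) : Fin (p + 1))) (backOrbit R (n + 1) j y)))

/-- Terms of the series defining the `N`-part of the solution. -/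
def Bterm {p : ℕ} (T : Y ≃L[𝕜] Y) (PN : Y →L[𝕜] Y) (R : Fin (p + 1) → Y ≃ₜ Y)
    (g : Fin (p + 1) → Y → Y) (n : ℕ) (j : Fin (p + 1)) (x : Y) : Y :=
  (⇑T.symm)^[n + 1] (PN (g (j + ((n : ℕ) : Fin (p + 1))) (fwdOrbit R n j x)))

lemma Aterm_zero {p : ℕ} (T : Y ≃L[𝕜] Y) (PM : Y →L[𝕜] Y) (R : Fin (p + 1) → Y ≃ₜ Y)
    (g : Fin (p + 1) → Y → Y) (j : Fin (p + 1)) (y : Y) :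
    Aterm T PM R g 0 j y = PM (g (j - 1) ((R (j - 1)).symm y)) := by
  simp [Aterm, backOrbit]

lemma Aterm_succ {p : ℕ} (T : Y ≃L[𝕜] Y) (PM : Y →L[𝕜] Y) (R : Fin (p + 1) → Y ≃ₜ Y)
    (g : Fin (p + 1) → Y → Y) (n : ℕ) (j : Fin (p + 1)) (y : Y) :
    Aterm T PM R g (n + 1) j y = T (Aterm T PM R g n (j - 1) ((R (j - 1)).symm y)) := by
  have hidx : (j - ((n + 1 + 1 : ℕ) : Fin (p + 1))) = (j - 1) - ((n + 1 : ℕ) : Fin (p + 1)) := by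
    push_cast
    ring
  rw [Aterm, Function.iterate_succ_apply', Aterm, hidx]
  rfl

lemma Bterm_zero {p : ℕ} (T : Y ≃L[𝕜] Y) (PN : Y →L[𝕜] Y) (R : Fin (p + 1) → Y ≃ₜ Y)
    (g : Fin (p + 1) → Y → Y) (j : Fin (p + 1)) (x : Y) :
    Bterm T PN R g 0 j x = T.symm (PN (g j x)) := by
  simp [Bterm, fwdOrbit]

lemma Bterm_succ {p : ℕ} (T : Y ≃L[𝕜] Y) (PN : Y →L[𝕜] Y) (R : Fin (p + 1) → Y ≃ₜ Y)
    (g : Fin (p + 1) → Y → Y) (n : ℕ) (j : Fin (p + 1)) (x : Y) :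
    Bterm T PN R g (n + 1) j x = T.symm (Bterm T PN R g n (j + 1) (R j x)) := by
  have hidx : (j + ((n + 1 : ℕ) : Fin (p + 1))) = (j + 1) + ((n : ℕ) : Fin (p + 1)) := by
    push_cast
    ring
  rw [Bterm, Bterm, Function.iterate_succ_apply', hidx]
  rfl

/-- `M`-part of the solution. -/
def uFun {p : ℕ} (T : Y ≃L[𝕜] Y) (PM : Y →L[𝕜] Y) (R : Fin (p + 1) → Y ≃ₜ Y)
    (g : Fin (p + 1) → Y → Y) (j : Fin (p + 1)) (y : Y) : Y :=
  ∑' n : ℕ, Aterm T PM R g n j y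

/-- `N`-part of the solution. -/
def vFun {p : ℕ} (T : Y ≃L[𝕜] Y) (PN : Y →L[𝕜] Y) (R : Fin (p + 1) → Y ≃ₜ Y)
    (g : Fin (p + 1) → Y → Y) (j : Fin (p + 1)) (x : Y) : Y :=
  -∑' n : ℕ, Bterm T PN R g n j x

lemma uFun_rec [CompleteSpace Y] {p : ℕ} (T : Y ≃L[𝕜] Y) (PM : Y →L[𝕜] Y)
    (R : Fin (p + 1) → Y ≃ₜ Y) (g : Fin (p + 1) → Y → Y)
    (hsum : ∀ j y, Summable fun n => Aterm T PM R g n j y) (j : Fin (p + 1)) (y : Y) :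
    uFun T PM R g j y =
      T (uFun T PM R g (j - 1) ((R (j - 1)).symm y)) + PM (g (j - 1) ((R (j - 1)).symm y)) := by
  rw [uFun, (hsum j y).tsum_eq_zero_add, Aterm_zero]
  simp_rw [Aterm_succ]
  rw [← T.map_tsum, ← uFun]
  abel

lemma vFun_rec [CompleteSpace Y] {p : ℕ} (T : Y ≃L[𝕜] Y) (PN : Y →L[𝕜] Y)
    (R : Fin (p + 1) → Y ≃ₜ Y) (g : Fin (p + 1) → Y → Y)
    (hsum : ∀ j x, Summable fun n => Bterm T PN R g n j x) (j : Fin (p + 1)) (x : Y) :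
    vFun T PN R g j x =
      T.symm (vFun T PN R g (j + 1) (R j x)) - T.symm (PN (g j x)) := by
  rw [vFun, (hsum j x).tsum_eq_zero_add, Bterm_zero]
  simp_rw [Bterm_succ]
  rw [← T.symm.map_tsum, vFun, map_neg]
  abel

end InvariantEqAux

open InvariantEqAux Filter Topology in
/-- Bijectivity of the operator `F ↦ F ∘ R - T ∘ F` on maps with values in
`Y = M + T⁻¹(N)`, together with the norm bound `a·b·(1+t)/(1-t)` for its inverse:
for every family of continuous bounded maps `g_j` there is a unique family of continuous
bounded maps `f_j` with values in `Y` such that `f_{j+1}(R_j x) - T(f_j x) = g_j x`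
(indices mod `p`), and it satisfies
`max_j sup_x ‖f_j x‖ ≤ (a·b·(1+t)/(1-t)) · max_j sup_x ‖g_j x‖`. -/
theorem invariant_equation_bijectivity
    {𝕜 X : Type*} [RCLike 𝕜] [NormedAddCommGroup X] [NormedSpace 𝕜 X] [CompleteSpace X]
    (T : X ≃L[𝕜] X) (M N : Submodule 𝕜 X)
    (hMc : IsClosed (M : Set X)) (hNc : IsClosed (N : Set X)) (hcompl : IsCompl M N)
    (hM : ∀ x ∈ M, T x ∈ M) (hN : ∀ x ∈ N, T.symm x ∈ N)
    (a t : ℝ) (ha : 1 ≤ a) (ht : t ∈ Set.Ioo (0 : ℝ) 1)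
    (hMbound : ∀ (n : ℕ), ∀ y ∈ M, ‖(⇑T)^[n] y‖ ≤ a * t ^ n * ‖y‖)
    (hNbound : ∀ (n : ℕ), ∀ z ∈ N, ‖(⇑T.symm)^[n] z‖ ≤ a * t ^ n * ‖z‖)
    (PM PN : X →L[𝕜] X)
    (hPM : ∀ x, PM x ∈ M) (hPN : ∀ x, PN x ∈ N) (hP : ∀ x, PM x + PN x = x)
    (p : ℕ) (R : Fin (p + 1) → X ≃ₜ X) (g : Fin (p + 1) → X → X)
    (hgc : ∀ j, Continuous (g j)) (hgb : ∀ j, BoundedMap (g j)) :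
    (∃! f : Fin (p + 1) → X → X,
      (∀ j, Continuous (f j)) ∧ (∀ j, BoundedMap (f j)) ∧
      (∀ j x, f j x ∈ M ⊔ Submodule.comap ((T : X →L[𝕜] X) : X →ₗ[𝕜] X) N) ∧
      (∀ j x, f (j + 1) (R j x) - T (f j x) = g j x)) ∧
    (∀ f : Fin (p + 1) → X → X,
      (∀ j, Continuous (f j)) → (∀ j, BoundedMap (f j)) →
      (∀ j x, f j x ∈ M ⊔ Submodule.comap ((T : X →L[𝕜] X) : X →ₗ[𝕜] X) N) →
      (∀ j x, f (j + 1) (R j x) - T (f j x) = g j x) →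
      ∀ j x, ‖f j x‖ ≤
        a * max ‖PM‖ ‖PN‖ * (1 + t) / (1 - t) * ⨆ i, ⨆ y, ‖g i y‖) := by
  obtain ⟨ht0, ht1⟩ := ht
  have ht0' : (0 : ℝ) ≤ t := ht0.le
  have h1t : (0 : ℝ) < 1 - t := by linarith
  set Ncomap : Submodule 𝕜 X := Submodule.comap ((T : X →L[𝕜] X) : X →ₗ[𝕜] X) N
    with hNcomapDef
  have hmemNcomap : ∀ z : X, z ∈ Ncomap ↔ T z ∈ N := by
    intro z
    simp [hNcomapDef, Submodule.mem_comap]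
  set b : ℝ := max ‖PM‖ ‖PN‖ with hb
  have hb0 : (0 : ℝ) ≤ b := le_trans (norm_nonneg PM) (le_max_left _ _)
  have hbdd : ∀ i : Fin (p + 1), BddAbove (Set.range fun y => ‖g i y‖) := fun i =>
    ⟨(hgb i).choose, by rintro _ ⟨y, rfl⟩; exact (hgb i).choose_spec y⟩
  set G : ℝ := ⨆ i, ⨆ y, ‖g i y‖ with hGdef
  have hG : ∀ i y, ‖g i y‖ ≤ G := by
    intro i y
    rw [hGdef]
    have h1 : ‖g i y‖ ≤ ⨆ z, ‖g i z‖ := le_ciSup (hbdd i) y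
    have h2 : (⨆ z, ‖g i z‖) ≤ ⨆ k, ⨆ z, ‖g k z‖ :=
      le_ciSup (f := fun k => ⨆ z, ‖g k z‖) (Set.Finite.bddAbove (Set.finite_range _)) i
    exact h1.trans h2
  have hG0 : (0 : ℝ) ≤ G := le_trans (norm_nonneg _) (hG 0 0)
  have ha0 : (0 : ℝ) < a := lt_of_lt_of_le one_pos ha
  have hPMb : ∀ w, ‖PM w‖ ≤ b * ‖w‖ := fun w =>
    le_trans (PM.le_opNorm w) (mul_le_mul_of_nonneg_right (le_max_left _ _) (norm_nonneg w))
  have hPNb : ∀ w, ‖PN w‖ ≤ b * ‖w‖ := fun w =>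
    le_trans (PN.le_opNorm w) (mul_le_mul_of_nonneg_right (le_max_right _ _) (norm_nonneg w))
  have hMiter : ∀ n : ℕ, ∀ y ∈ M, (⇑T)^[n] y ∈ M := by
    intro n
    induction n with
    | zero => intro y hy; simpa using hy
    | succ n ih =>
      intro y hy
      rw [Function.iterate_succ_apply']
      exact hM _ (ih y hy)
  have hNiter : ∀ n : ℕ, ∀ z ∈ N, (⇑T.symm)^[n] z ∈ N := by
    intro n
    induction n with
    | zero => intro z hz; simpa using hz
    | succ n ih =>
      intro z hz
      rw [Function.iterate_succ_apply']
      exact hN _ (ih z hz)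
  -- uniqueness of the `M ⊕ N` decomposition
  have hdisj : ∀ w : X, w ∈ M → w ∈ N → w = 0 := fun w hwM hwN =>
    (Submodule.disjoint_def.mp hcompl.disjoint) w hwM hwN
  have hdec : ∀ y m n' : X, m ∈ M → n' ∈ N → y = m + n' → PM y = m ∧ PN y = n' := by
    intro y m n' hm hn' hy
    have hsub : PM y - m = n' - PN y := by
      rw [sub_eq_sub_iff_add_eq_add, hP y, hy]
      abel
    have h1 : PM y - m ∈ M := M.sub_mem (hPM y) hm
    have h2 : PM y - m ∈ N := hsub ▸ N.sub_mem hn' (hPN y)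
    have hm' : PM y = m := sub_eq_zero.mp (hdisj _ h1 h2)
    refine ⟨hm', ?_⟩
    have h := hP y
    rw [hm'] at h
    exact add_left_cancel (h.trans hy)
  have hprojT : ∀ w, w ∈ M ⊔ Ncomap → PM (T w) = T (PM w) ∧ PN (T w) = T (PN w) := by
    intro w hw
    obtain ⟨m, hm, z, hz, hmz⟩ := Submodule.mem_sup.mp hw
    have hzT : T z ∈ N := (hmemNcomap z).mp hz
    have hzN : z ∈ N := by
      have h := hN _ hzT
      simpa using h
    obtain ⟨hPMw, hPNw⟩ := hdec w m z hm hzN hmz.symm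
    have hTw : T w = T m + T z := by rw [← hmz, map_add]
    obtain ⟨h1, h2⟩ := hdec (T w) (T m) (T z) (hM m hm) hzT hTw
    exact ⟨by rw [h1, hPMw], by rw [h2, hPNw]⟩
  -- the homogeneous equation has only the zero bounded solution
  have hzero : ∀ d : Fin (p + 1) → X → X, (∃ C, ∀ j x, ‖d j x‖ ≤ C) →
      (∀ j x, d j x ∈ M ⊔ Ncomap) → (∀ j x, d (j + 1) (R j x) = T (d j x)) →
      ∀ j x, d j x = 0 := by
    intro d hCex hdm hde
    obtain ⟨C, hC⟩ := hCex
    have hdePM : ∀ j x, PM (d (j + 1) (R j x)) = T (PM (d j x)) := fun j x => by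
      rw [hde j x]
      exact (hprojT _ (hdm j x)).1
    have hdePN : ∀ j x, PN (d (j + 1) (R j x)) = T (PN (d j x)) := fun j x => by
      rw [hde j x]
      exact (hprojT _ (hdm j x)).2
    have huIter : ∀ n : ℕ, ∀ j y, ∃ j' x', PM (d j y) = (⇑T)^[n] (PM (d j' x')) := by
      intro n
      induction n with
      | zero => exact fun j y => ⟨j, y, rfl⟩
      | succ n ih =>
        intro j y
        have h1 : PM (d j y) = T (PM (d (j - 1) ((R (j - 1)).symm y))) := by
          simpa [sub_add_cancel] using hdePM (j - 1) ((R (j - 1)).symm y)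
        obtain ⟨j', x', h2⟩ := ih (j - 1) ((R (j - 1)).symm y)
        refine ⟨j', x', ?_⟩
        rw [Function.iterate_succ_apply', ← h2]
        exact h1
    have hvIter : ∀ n : ℕ, ∀ j x, ∃ j' x', PN (d j x) = (⇑T.symm)^[n] (PN (d j' x')) := by
      intro n
      induction n with
      | zero => exact fun j x => ⟨j, x, rfl⟩
      | succ n ih =>
        intro j x
        have h1 : PN (d j x) = T.symm (PN (d (j + 1) (R j x))) := by
          rw [hdePN j x, ContinuousLinearEquiv.symm_apply_apply]
        obtain ⟨j', x', h2⟩ := ih (j + 1) (R j x)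
        refine ⟨j', x', ?_⟩
        rw [Function.iterate_succ_apply', ← h2]
        exact h1
    have huZero : ∀ j y, PM (d j y) = 0 := by
      intro j y
      have hbnd : ∀ n : ℕ, ‖PM (d j y)‖ ≤ a * (‖PM‖ * C) * t ^ n := by
        intro n
        obtain ⟨j', x', h⟩ := huIter n j y
        rw [h]
        calc ‖(⇑T)^[n] (PM (d j' x'))‖ ≤ a * t ^ n * ‖PM (d j' x')‖ := hMbound n _ (hPM _)
          _ ≤ a * t ^ n * (‖PM‖ * C) := by
              refine mul_le_mul_of_nonneg_left ?_ (by positivity)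
              exact (PM.le_opNorm _).trans
                (mul_le_mul_of_nonneg_left (hC j' x') (norm_nonneg _))
          _ = a * (‖PM‖ * C) * t ^ n := by ring
      have hlim : Tendsto (fun n : ℕ => a * (‖PM‖ * C) * t ^ n) atTop (𝓝 0) := by
        simpa using (tendsto_pow_atTop_nhds_zero_of_lt_one ht0' ht1).const_mul (a * (‖PM‖ * C))
      have h0 : ‖PM (d j y)‖ ≤ 0 := ge_of_tendsto' hlim hbnd
      simpa using le_antisymm h0 (norm_nonneg _)
    have hvZero : ∀ j x, PN (d j x) = 0 := by
      intro j x
      have hbnd : ∀ n : ℕ, ‖PN (d j x)‖ ≤ a * (‖PN‖ * C) * t ^ n := by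
        intro n
        obtain ⟨j', x', h⟩ := hvIter n j x
        rw [h]
        calc ‖(⇑T.symm)^[n] (PN (d j' x'))‖ ≤ a * t ^ n * ‖PN (d j' x')‖ :=
              hNbound n _ (hPN _)
          _ ≤ a * t ^ n * (‖PN‖ * C) := by
              refine mul_le_mul_of_nonneg_left ?_ (by positivity)
              exact (PN.le_opNorm _).trans
                (mul_le_mul_of_nonneg_left (hC j' x') (norm_nonneg _))
          _ = a * (‖PN‖ * C) * t ^ n := by ring
      have hlim : Tendsto (fun n : ℕ => a * (‖PN‖ * C) * t ^ n) atTop (𝓝 0) := by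
        simpa using (tendsto_pow_atTop_nhds_zero_of_lt_one ht0' ht1).const_mul (a * (‖PN‖ * C))
      have h0 : ‖PN (d j x)‖ ≤ 0 := ge_of_tendsto' hlim hbnd
      simpa using le_antisymm h0 (norm_nonneg _)
    intro j x
    have h := hP (d j x)
    rw [huZero j x, hvZero j x] at h
    simpa using h.symm
  -- uniqueness of solutions
  have huniq : ∀ f f' : Fin (p + 1) → X → X,
      (∀ j, BoundedMap (f j)) → (∀ j, BoundedMap (f' j)) →
      (∀ j x, f j x ∈ M ⊔ Ncomap) → (∀ j x, f' j x ∈ M ⊔ Ncomap) →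
      (∀ j x, f (j + 1) (R j x) - T (f j x) = g j x) →
      (∀ j x, f' (j + 1) (R j x) - T (f' j x) = g j x) →
      ∀ j x, f j x = f' j x := by
    intro f f' hfb hf'b hfm hf'm hfe hf'e j x
    have hd := hzero (fun j x => f j x - f' j x) ?_ ?_ ?_ j x
    · exact sub_eq_zero.mp hd
    · choose Cf hCf using hfb
      choose Cf' hCf' using hf'b
      refine ⟨Finset.univ.sup' Finset.univ_nonempty (fun i => Cf i + Cf' i), fun i y => ?_⟩
      exact le_trans (norm_sub_le _ _) (le_trans (add_le_add (hCf i y) (hCf' i y))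
        (Finset.le_sup' (fun i => Cf i + Cf' i) (Finset.mem_univ i)))
    · exact fun i y => Submodule.sub_mem _ (hfm i y) (hf'm i y)
    · intro i y
      show f (i + 1) (R i y) - f' (i + 1) (R i y) = T (f i y - f' i y)
      rw [map_sub]
      exact sub_eq_sub_iff_sub_eq_sub.mpr ((hfe i y).trans (hf'e i y).symm)
  -- bounds on the series terms
  have hAmem : ∀ n j y, Aterm T PM R g n j y ∈ M := fun n j y => hMiter n _ (hPM _)
  have hBmem : ∀ n j x, Bterm T PN R g n j x ∈ N := fun n j x => hNiter (n + 1) _ (hPN _)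
  have hAb : ∀ n j y, ‖Aterm T PM R g n j y‖ ≤ a * b * G * t ^ n := by
    intro n j y
    calc ‖Aterm T PM R g n j y‖ ≤ a * t ^ n * ‖PM (g _ (backOrbit R (n + 1) j y))‖ :=
          hMbound n _ (hPM _)
      _ ≤ a * t ^ n * (b * G) := by
          refine mul_le_mul_of_nonneg_left ?_ (by positivity)
          exact (hPMb _).trans (mul_le_mul_of_nonneg_left (hG _ _) hb0)
      _ = a * b * G * t ^ n := by ring
  have hBb : ∀ n j x, ‖Bterm T PN R g n j x‖ ≤ a * b * G * t * t ^ n := by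
    intro n j x
    calc ‖Bterm T PN R g n j x‖ ≤ a * t ^ (n + 1) * ‖PN (g _ (fwdOrbit R n j x))‖ :=
          hNbound (n + 1) _ (hPN _)
      _ ≤ a * t ^ (n + 1) * (b * G) := by
          refine mul_le_mul_of_nonneg_left ?_ (by positivity)
          exact (hPNb _).trans (mul_le_mul_of_nonneg_left (hG _ _) hb0)
      _ = a * b * G * t * t ^ n := by ring
  have hsumA : Summable fun n : ℕ => a * b * G * t ^ n :=
    (summable_geometric_of_lt_one ht0' ht1).mul_left _
  have hsumB : Summable fun n : ℕ => a * b * G * t * t ^ n :=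
    (summable_geometric_of_lt_one ht0' ht1).mul_left _
  have hAsum : ∀ j y, Summable fun n => Aterm T PM R g n j y := fun j y =>
    Summable.of_norm_bounded hsumA (fun n => hAb n j y)
  have hBsum : ∀ j x, Summable fun n => Bterm T PN R g n j x := fun j x =>
    Summable.of_norm_bounded hsumB (fun n => hBb n j x)
  have hgeoA : (∑' n : ℕ, a * b * G * t ^ n) = a * b * G / (1 - t) := by
    rw [tsum_mul_left, tsum_geometric_of_lt_one ht0' ht1, div_eq_mul_inv]
  have hgeoB : (∑' n : ℕ, a * b * G * t * t ^ n) = a * b * G * t / (1 - t) := by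
    rw [tsum_mul_left, tsum_geometric_of_lt_one ht0' ht1, div_eq_mul_inv]
  have huuB : ∀ j y, ‖uFun T PM R g j y‖ ≤ a * b * G / (1 - t) := by
    intro j y
    rw [← hgeoA]
    exact tsum_of_norm_bounded hsumA.hasSum (fun n => hAb n j y)
  have hvvB : ∀ j x, ‖vFun T PN R g j x‖ ≤ a * b * G * t / (1 - t) := by
    intro j x
    rw [← hgeoB, vFun, norm_neg]
    exact tsum_of_norm_bounded hsumB.hasSum (fun n => hBb n j x)
  have huuMem : ∀ j y, uFun T PM R g j y ∈ M := fun j y =>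
    tsum_mem_of_isClosed hMc (hAsum j y) (fun n => hAmem n j y)
  have hvvN : ∀ j x, vFun T PN R g j x ∈ N := fun j x =>
    N.neg_mem (tsum_mem_of_isClosed hNc (hBsum j x) (fun n => hBmem n j x))
  -- the equations satisfied by `uFun` and `vFun`
  have huEq : ∀ j x, uFun T PM R g (j + 1) (R j x) = T (uFun T PM R g j x) + PM (g j x) := by
    intro j x
    have h := uFun_rec T PM R g hAsum (j + 1) (R j x)
    simpa [add_sub_cancel_right] using h
  have hvEq : ∀ j x, T (vFun T PN R g j x) = vFun T PN R g (j + 1) (R j x) - PN (g j x) := by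
    intro j x
    rw [vFun_rec T PN R g hBsum j x, map_sub, T.apply_symm_apply, T.apply_symm_apply]
  have hvvNcomap : ∀ j x, vFun T PN R g j x ∈ Ncomap := by
    intro j x
    rw [hmemNcomap, hvEq j x]
    exact N.sub_mem (hvvN _ _) (hPN _)
  -- assemble the solution
  set f₀ : Fin (p + 1) → X → X := fun j x => uFun T PM R g j x + vFun T PN R g j x with hf₀
  have hf₀mem : ∀ j x, f₀ j x ∈ M ⊔ Ncomap := fun j x =>
    Submodule.mem_sup.mpr ⟨_, huuMem j x, _, hvvNcomap j x, rfl⟩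
  have hf₀Eq : ∀ j x, f₀ (j + 1) (R j x) - T (f₀ j x) = g j x := by
    intro j x
    show (uFun T PM R g (j + 1) (R j x) + vFun T PN R g (j + 1) (R j x)) -
      T (uFun T PM R g j x + vFun T PN R g j x) = g j x
    rw [map_add, huEq j x, hvEq j x]
    conv_rhs => rw [← hP (g j x)]
    abel
  have hf₀b : ∀ j, BoundedMap (f₀ j) := by
    intro j
    refine ⟨a * b * G / (1 - t) + a * b * G * t / (1 - t), fun x => ?_⟩
    exact (norm_add_le _ _).trans (add_le_add (huuB j x) (hvvB j x))
  have hAc : ∀ n j, Continuous (Aterm T PM R g n j) := fun n j =>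
    (T.continuous.iterate n).comp <| PM.continuous.comp <| (hgc _).comp <|
      continuous_backOrbit R (n + 1) j
  have hBc : ∀ n j, Continuous (Bterm T PN R g n j) := fun n j =>
    (T.symm.continuous.iterate (n + 1)).comp <| PN.continuous.comp <| (hgc _).comp <|
      continuous_fwdOrbit R n j
  have hf₀c : ∀ j, Continuous (f₀ j) := by
    intro j
    have h1 : Continuous (uFun T PM R g j) :=
      continuous_tsum (fun n => hAc n j) hsumA (fun n y => hAb n j y)
    have h2 : Continuous (vFun T PN R g j) :=
      (continuous_tsum (fun n => hBc n j) hsumB (fun n x => hBb n j x)).neg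
    exact h1.add h2
  have hbound : ∀ j x, ‖f₀ j x‖ ≤ a * b * (1 + t) / (1 - t) * G := by
    intro j x
    calc ‖f₀ j x‖ ≤ a * b * G / (1 - t) + a * b * G * t / (1 - t) :=
          (norm_add_le _ _).trans (add_le_add (huuB j x) (hvvB j x))
      _ = a * b * (1 + t) / (1 - t) * G := by
          field_simp
  refine ⟨⟨f₀, ⟨hf₀c, hf₀b, hf₀mem, hf₀Eq⟩, ?_⟩, ?_⟩
  · rintro f ⟨hfc, hfb, hfm, hfe⟩
    funext j x
    exact huniq f f₀ hfb hf₀b hfm hf₀mem hfe hf₀Eq j x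
  · intro f hfc hfb hfm hfe j x
    rw [huniq f f₀ hfb hf₀b hfm hf₀mem hfe hf₀Eq j x]
    exact hbound j x
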